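/- Fix n ≥ 0. Let E_n = {1,2,3,4} ∪ X ∪ Y ∪ Z where X = {x₀,…,xₙ}, Y = {y₀,…,yₙ}, Z = {z₀,…,zₙ} are pairwise disjoint sets of size n+1 disjoint from {1,2,3,4}. Define H₁ = {1} ∪ Y ∪ Z, H₂ = {2} ∪ X ∪ Z, H₃ = {3} ∪ X ∪ Y, C₁ = {1,4} ∪ X, C₂ = {2,4} ∪ Y, C₃ = {3,4} ∪ Z, and let B_n be the collection of (n+3)-element subsets B of E_n such that {1,2,3} ⊄ B, and B ⊄ Cᵢ and B ⊄ Hᵢ for all i ∈ {1,2,3}. Then (E_n, B_n) satisfies the basis exchange axiom: for all A, B ∈ B_n and α ∈ A \ B, there exists β ∈ B \ A with (A \ {α}) ∪ {β} ∈ B_n; hence (E_n, B_n) is a matroid of rank n+3. -/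

import Mathlib

open Finset

/-- The ground set `E_n = {1,2,3,4} ∪ X ∪ Y ∪ Z`: the four special points are `Sum.inl 0, …,
Sum.inl 3` (standing for `1,2,3,4`), and `Sum.inr (k, j)` is the `j`-th element of `X`, `Y`, `Z`
for `k = 0, 1, 2` respectively. -/
abbrev MIElt (n : ℕ) := Fin 4 ⊕ (Fin 3 × Fin (n + 1))

/-- `MIXYZ n 0 = X`, `MIXYZ n 1 = Y`, `MIXYZ n 2 = Z`. -/
def MIXYZ (n : ℕ) (k : Fin 3) : Finset (MIElt n) :=
  (Finset.univ : Finset (Fin (n + 1))).image fun j => Sum.inr (k, j)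

/-- `H₁ = {1} ∪ Y ∪ Z`, `H₂ = {2} ∪ X ∪ Z`, `H₃ = {3} ∪ X ∪ Y` (indices shifted to `0,1,2`). -/
def MIH (n : ℕ) (i : Fin 3) : Finset (MIElt n) :=
  insert (Sum.inl i.castSucc) (MIXYZ n (i + 1) ∪ MIXYZ n (i + 2))

/-- `C₁ = {1,4} ∪ X`, `C₂ = {2,4} ∪ Y`, `C₃ = {3,4} ∪ Z` (indices shifted to `0,1,2`). -/
def MIC (n : ℕ) (i : Fin 3) : Finset (MIElt n) :=
  insert (Sum.inl i.castSucc) (insert (Sum.inl 3) (MIXYZ n i))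

/-- The set `{1,2,3}` of special points. -/
def MIT (n : ℕ) : Finset (MIElt n) := {Sum.inl 0, Sum.inl 1, Sum.inl 2}

/-- The collection `B_n` of bases of the matroid `MI_n`. -/
def MIBases (n : ℕ) (B : Finset (MIElt n)) : Prop :=
  B.card = n + 3 ∧ ¬ MIT n ⊆ B ∧ ∀ i : Fin 3, ¬ B ⊆ MIC n i ∧ ¬ B ⊆ MIH n i

section MIHelpers

variable {n : ℕ}

lemma mem_MIXYZ_iff {k : Fin 3} {x : MIElt n} : x ∈ MIXYZ n k ↔ ∃ j, x = Sum.inr (k, j) := by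
  simp [MIXYZ, eq_comm]

lemma MIXYZ_card (k : Fin 3) : (MIXYZ n k).card = n + 1 := by
  rw [MIXYZ, Finset.card_image_of_injective _ (fun a b h => by simpa using h), card_univ,
    Fintype.card_fin]

lemma inl_not_mem_MIXYZ {k : Fin 3} {s : Fin 4} : Sum.inl s ∉ MIXYZ n k := by
  simp [mem_MIXYZ_iff]

lemma castSucc_ne_three : ∀ i : Fin 3, i.castSucc ≠ (3 : Fin 4) := by decide

lemma fin3_third : ∀ i j k : Fin 3, i ≠ j → k ≠ i → k ≠ j → k = -(i + j) := by decide

lemma mem_MIH_inl {i : Fin 3} {s : Fin 4} (h : Sum.inl s ∈ MIH n i) : s = i.castSucc := by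
  rcases Finset.mem_insert.1 h with h | h
  · exact Sum.inl.inj h
  · rcases Finset.mem_union.1 h with h | h <;> exact absurd h inl_not_mem_MIXYZ

lemma mem_MIH_inr {i k : Fin 3} {j : Fin (n + 1)} (h : Sum.inr (k, j) ∈ MIH n i) : k ≠ i := by
  rcases Finset.mem_insert.1 h with h | h
  · simp at h
  · have e1 : ∀ i : Fin 3, i + 1 ≠ i := by decide
    have e2 : ∀ i : Fin 3, i + 2 ≠ i := by decide
    rcases Finset.mem_union.1 h with h | h <;>
        (obtain ⟨j', hj⟩ := mem_MIXYZ_iff.1 h; simp only [Sum.inr.injEq, Prod.mk.injEq] at hj)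
    · rw [hj.1]; exact e1 i
    · rw [hj.1]; exact e2 i

lemma mem_MIC_inl {i : Fin 3} {s : Fin 4} (h : Sum.inl s ∈ MIC n i) :
    s = i.castSucc ∨ s = 3 := by
  rcases Finset.mem_insert.1 h with h | h
  · exact Or.inl (Sum.inl.inj h)
  · rcases Finset.mem_insert.1 h with h | h
    · exact Or.inr (Sum.inl.inj h)
    · exact absurd h inl_not_mem_MIXYZ

lemma mem_MIC_inr {i k : Fin 3} {j : Fin (n + 1)} (h : Sum.inr (k, j) ∈ MIC n i) : k = i := by
  rcases Finset.mem_insert.1 h with h | h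
  · simp at h
  · rcases Finset.mem_insert.1 h with h | h
    · simp at h
    · obtain ⟨j', hj⟩ := mem_MIXYZ_iff.1 h
      simp only [Sum.inr.injEq, Prod.mk.injEq] at hj
      exact hj.1

lemma card_MIC (i : Fin 3) : (MIC n i).card = n + 3 := by
  rw [MIC, Finset.card_insert_of_notMem, Finset.card_insert_of_notMem inl_not_mem_MIXYZ,
    MIXYZ_card]
  intro h
  rcases Finset.mem_insert.1 h with h | h
  · exact castSucc_ne_three i (Sum.inl.inj h)
  · exact inl_not_mem_MIXYZ h

lemma subset_H_H {D : Finset (MIElt n)} {i j : Fin 3} (hcard : D.card = n + 2) (hij : i ≠ j)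
    (h1 : D ⊆ MIH n i) (h2 : D ⊆ MIH n j) : False := by
  have hsub : D ⊆ MIXYZ n (-(i + j)) := by
    intro x hx
    rcases x with s | ⟨k, jj⟩
    · have e1 := mem_MIH_inl (h1 hx)
      have e2 := mem_MIH_inl (h2 hx)
      exact absurd (Fin.castSucc_inj.mp (e1.symm.trans e2)) hij
    · have k1 := mem_MIH_inr (h1 hx)
      have k2 := mem_MIH_inr (h2 hx)
      exact mem_MIXYZ_iff.2 ⟨jj, by rw [fin3_third i j k hij k1 k2]⟩
  have := Finset.card_le_card hsub
  rw [MIXYZ_card] at this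
  omega

lemma subset_H_C {D : Finset (MIElt n)} {i j : Fin 3} (hcard : D.card = n + 2)
    (h1 : D ⊆ MIH n i) (h2 : D ⊆ MIC n j) : False := by
  by_cases hij : i = j
  · subst hij
    have hsub : D ⊆ {Sum.inl i.castSucc} := by
      intro x hx
      rcases x with s | ⟨k, jj⟩
      · simp [mem_MIH_inl (h1 hx)]
      · exact absurd (mem_MIC_inr (h2 hx)) (mem_MIH_inr (h1 hx))
    have := Finset.card_le_card hsub
    simp at this
    omega
  · have hsub : D ⊆ MIXYZ n j := by
      intro x hx
      rcases x with s | ⟨k, jj⟩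
      · have e1 := mem_MIH_inl (h1 hx)
        rcases mem_MIC_inl (h2 hx) with e2 | e2
        · exact absurd (Fin.castSucc_inj.mp (e1.symm.trans e2)) hij
        · exact absurd (e1.symm.trans e2) (castSucc_ne_three i)
      · exact mem_MIXYZ_iff.2 ⟨jj, by rw [mem_MIC_inr (h2 hx)]⟩
    have := Finset.card_le_card hsub
    rw [MIXYZ_card] at this
    omega

lemma subset_C_C {D : Finset (MIElt n)} {i j : Fin 3} (hcard : D.card = n + 2) (hij : i ≠ j)
    (h1 : D ⊆ MIC n i) (h2 : D ⊆ MIC n j) : False := by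
  have hsub : D ⊆ {Sum.inl 3} := by
    intro x hx
    rcases x with s | ⟨k, jj⟩
    · rcases mem_MIC_inl (h1 hx) with e1 | e1
      · rcases mem_MIC_inl (h2 hx) with e2 | e2
        · exact absurd (Fin.castSucc_inj.mp (e1.symm.trans e2)) hij
        · exact absurd (e1.symm.trans e2) (castSucc_ne_three i)
      · simp [e1]
    · exact absurd ((mem_MIC_inr (h1 hx)).symm.trans (mem_MIC_inr (h2 hx))) hij
  have := Finset.card_le_card hsub
  simp at this
  omega

lemma MI_exists_base (n : ℕ) : ∃ B, MIBases n B := by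
  refine ⟨insert (Sum.inl 0) (insert (Sum.inl 1)
      (insert (Sum.inl 3) ((MIXYZ n 0).erase (Sum.inr (0, 0))))), ?_, ?_, ?_⟩
  · have h00 : (Sum.inr ((0 : Fin 3), (0 : Fin (n + 1))) : MIElt n) ∈ MIXYZ n 0 :=
      mem_MIXYZ_iff.2 ⟨0, rfl⟩
    have h3 : (Sum.inl (3 : Fin 4) : MIElt n) ∉ (MIXYZ n 0).erase (Sum.inr (0, 0)) :=
      fun h => inl_not_mem_MIXYZ (Finset.mem_erase.1 h).2
    have h1 : (Sum.inl (1 : Fin 4) : MIElt n) ∉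
        insert (Sum.inl 3) ((MIXYZ n 0).erase (Sum.inr (0, 0))) := by
      intro h
      rcases Finset.mem_insert.1 h with h | h
      · simp at h
      · exact inl_not_mem_MIXYZ (Finset.mem_erase.1 h).2
    have h0 : (Sum.inl (0 : Fin 4) : MIElt n) ∉ insert (Sum.inl 1)
        (insert (Sum.inl 3) ((MIXYZ n 0).erase (Sum.inr (0, 0)))) := by
      intro h
      rcases Finset.mem_insert.1 h with h | h
      · simp at h
      · rcases Finset.mem_insert.1 h with h | h
        · simp at h
        · exact inl_not_mem_MIXYZ (Finset.mem_erase.1 h).2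
    rw [Finset.card_insert_of_notMem h0, Finset.card_insert_of_notMem h1,
      Finset.card_insert_of_notMem h3, Finset.card_erase_of_mem h00, MIXYZ_card]
    omega
  · intro h
    have := h (show (Sum.inl (2 : Fin 4) : MIElt n) ∈ MIT n by simp [MIT])
    simp only [Finset.mem_insert, Finset.mem_erase, mem_MIXYZ_iff] at this
    simp at this
  · intro i
    constructor
    · intro h
      fin_cases i
      · have := mem_MIC_inl (h (show (Sum.inl (1 : Fin 4) : MIElt n) ∈ _ by simp))
        revert this; decide
      · have := mem_MIC_inl (h (show (Sum.inl (0 : Fin 4) : MIElt n) ∈ _ by simp))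
        revert this; decide
      · have := mem_MIC_inl (h (show (Sum.inl (0 : Fin 4) : MIElt n) ∈ _ by simp))
        revert this; decide
    · intro h
      have := mem_MIH_inl (h (show (Sum.inl (3 : Fin 4) : MIElt n) ∈ _ by simp))
      exact castSucc_ne_three i this.symm

lemma MI_exchange (n : ℕ) : ∀ A B : Finset (MIElt n), MIBases n A → MIBases n B →
    ∀ a ∈ A \ B, ∃ b ∈ B \ A, MIBases n (insert b (A.erase a)) := by
  intro A B hA hB a ha
  obtain ⟨haA, haB⟩ := Finset.mem_sdiff.1 ha
  set D := A.erase a with hDdef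
  have hDA : D ⊆ A := Finset.erase_subset _ _
  have hDcard : D.card = n + 2 := by
    rw [hDdef, Finset.card_erase_of_mem haA, hA.1]; omega

  have hTD : ¬ MIT n ⊆ D := fun h => hA.2.1 (h.trans hDA)
  by_cases hH : ∃ i, D ⊆ MIH n i
  · obtain ⟨i, hDi⟩ := hH
    obtain ⟨b, hbB, hbH⟩ := Finset.not_subset.1 (hB.2.2 i).2
    have hbA : b ∉ A := by
      intro hbA'
      have hba : b ≠ a := fun e => haB (e ▸ hbB)
      exact hbH (hDi (Finset.mem_erase.2 ⟨hba, hbA'⟩))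
    have hbD : b ∉ D := fun h => hbH (hDi h)
    refine ⟨b, Finset.mem_sdiff.2 ⟨hbB, hbA⟩, ?_, ?_, ?_⟩
    · rw [Finset.card_insert_of_notMem hbD, hDcard]
    · intro hT
      obtain ⟨s, t, hst, hsi, hti, hsT, htT⟩ :
          ∃ s t : Fin 4, s ≠ t ∧ s ≠ i.castSucc ∧ t ≠ i.castSucc ∧
            (Sum.inl s : MIElt n) ∈ MIT n ∧ (Sum.inl t : MIElt n) ∈ MIT n := by
        fin_cases i
        · exact ⟨1, 2, by decide, by decide, by decide, by simp [MIT], by simp [MIT]⟩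
        · exact ⟨0, 2, by decide, by decide, by decide, by simp [MIT], by simp [MIT]⟩
        · exact ⟨0, 1, by decide, by decide, by decide, by simp [MIT], by simp [MIT]⟩
      have hs : Sum.inl s = b :=
        (Finset.mem_insert.1 (hT hsT)).resolve_right (fun h => hsi (mem_MIH_inl (hDi h)))
      have ht : Sum.inl t = b :=
        (Finset.mem_insert.1 (hT htT)).resolve_right (fun h => hti (mem_MIH_inl (hDi h)))
      exact hst (Sum.inl.inj (hs.trans ht.symm))
    · intro j
      constructor
      · intro hsub
        exact subset_H_C hDcard hDi (fun x hx => hsub (Finset.mem_insert_of_mem hx))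
      · intro hsub
        by_cases hij : j = i
        · exact hbH (hij ▸ hsub (Finset.mem_insert_self _ _))
        · exact subset_H_H hDcard (Ne.symm hij) hDi
            (fun x hx => hsub (Finset.mem_insert_of_mem hx))
  · push_neg at hH
    have hTcase : ∀ b : MIElt n, MIT n ⊆ insert b D →
        (∃ s t : Fin 4, s ≠ t ∧ (Sum.inl s : MIElt n) ∈ D ∧ (Sum.inl t : MIElt n) ∈ D ∧
          s ≠ 3 ∧ t ≠ 3) ∧ ∀ x ∈ MIT n, x ∉ D → x = b := by
      intro b hT
      constructor
      · have h0 := Finset.mem_insert.1 (hT (show (Sum.inl (0 : Fin 4) : MIElt n) ∈ MIT n by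
          simp [MIT]))
        have h1 := Finset.mem_insert.1 (hT (show (Sum.inl (1 : Fin 4) : MIElt n) ∈ MIT n by
          simp [MIT]))
        have h2 := Finset.mem_insert.1 (hT (show (Sum.inl (2 : Fin 4) : MIElt n) ∈ MIT n by
          simp [MIT]))
        rcases h0 with h0 | h0 <;> rcases h1 with h1 | h1 <;> rcases h2 with h2 | h2
        · exact absurd (h0.trans h1.symm) (by simp)
        · exact absurd (h0.trans h1.symm) (by simp)
        · exact absurd (h0.trans h2.symm) (by simp)
        · exact ⟨1, 2, by decide, h1, h2, by decide, by decide⟩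
        · exact absurd (h1.trans h2.symm) (by simp)
        · exact ⟨0, 2, by decide, h0, h2, by decide, by decide⟩
        · exact ⟨0, 1, by decide, h0, h1, by decide, by decide⟩
        · exact ⟨0, 1, by decide, h0, h1, by decide, by decide⟩
      · intro x hx hxD
        rcases Finset.mem_insert.1 (hT hx) with h | h
        · exact h
        · exact absurd h hxD
    have huniq : ∀ b₁ b₂ : MIElt n, b₁ ∉ D → b₂ ∉ D →
        (MIT n ⊆ insert b₁ D ∨ ∃ j, insert b₁ D ⊆ MIC n j) →
        (MIT n ⊆ insert b₂ D ∨ ∃ j, insert b₂ D ⊆ MIC n j) → b₁ = b₂ := by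
      intro b₁ b₂ h₁D h₂D h₁ h₂
      rcases h₁ with h₁ | ⟨j₁, h₁⟩ <;> rcases h₂ with h₂ | ⟨j₂, h₂⟩
      · obtain ⟨t, htT, htD⟩ := Finset.not_subset.1 hTD
        exact ((hTcase b₁ h₁).2 t htT htD).symm.trans ((hTcase b₂ h₂).2 t htT htD)
      · obtain ⟨⟨s, t, hst, hsD, htD, hs3, ht3⟩, _⟩ := hTcase b₁ h₁
        have hsubC : D ⊆ MIC n j₂ := fun x hx => h₂ (Finset.mem_insert_of_mem hx)
        have es := (mem_MIC_inl (hsubC hsD)).resolve_right hs3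
        have et := (mem_MIC_inl (hsubC htD)).resolve_right ht3
        exact absurd (es.trans et.symm) hst
      · obtain ⟨⟨s, t, hst, hsD, htD, hs3, ht3⟩, _⟩ := hTcase b₂ h₂
        have hsubC : D ⊆ MIC n j₁ := fun x hx => h₁ (Finset.mem_insert_of_mem hx)
        have es := (mem_MIC_inl (hsubC hsD)).resolve_right hs3
        have et := (mem_MIC_inl (hsubC htD)).resolve_right ht3
        exact absurd (es.trans et.symm) hst
      · have hsub1 : D ⊆ MIC n j₁ := fun x hx => h₁ (Finset.mem_insert_of_mem hx)
        have hsub2 : D ⊆ MIC n j₂ := fun x hx => h₂ (Finset.mem_insert_of_mem hx)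
        have hj : j₁ = j₂ := by
          by_contra hne
          exact subset_C_C hDcard hne hsub1 hsub2
        subst hj
        have hcard1 : (MIC n j₁ \ D).card = 1 := by
          rw [Finset.card_sdiff_of_subset hsub1, card_MIC, hDcard]
          omega
        obtain ⟨x, hx⟩ := Finset.card_eq_one.1 hcard1
        have m1 : b₁ ∈ MIC n j₁ \ D :=
          Finset.mem_sdiff.2 ⟨h₁ (Finset.mem_insert_self _ _), h₁D⟩
        have m2 : b₂ ∈ MIC n j₁ \ D :=
          Finset.mem_sdiff.2 ⟨h₂ (Finset.mem_insert_self _ _), h₂D⟩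
        rw [hx] at m1 m2
        exact (Finset.mem_singleton.1 m1).trans (Finset.mem_singleton.1 m2).symm
    by_contra hcon
    push_neg at hcon
    have hbad : ∀ b ∈ B \ A, MIT n ⊆ insert b D ∨ ∃ j, insert b D ⊆ MIC n j := by
      intro b hb
      obtain ⟨hbB, hbA⟩ := Finset.mem_sdiff.1 hb
      have hbD : b ∉ D := fun h => hbA (hDA h)
      by_contra hgood
      push_neg at hgood
      obtain ⟨hg1, hg2⟩ := hgood
      exact hcon b hb ⟨by rw [Finset.card_insert_of_notMem hbD, hDcard], hg1,
        fun j => ⟨hg2 j, fun hsub => hH j (fun x hx => hsub (Finset.mem_insert_of_mem hx))⟩⟩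
    have hone : (B \ A).card ≤ 1 := Finset.card_le_one.2 (fun b₁ h₁ b₂ h₂ =>
      huniq b₁ b₂ (fun h => (Finset.mem_sdiff.1 h₁).2 (hDA h))
        (fun h => (Finset.mem_sdiff.1 h₂).2 (hDA h)) (hbad b₁ h₁) (hbad b₂ h₂))
    have h1 := Finset.card_sdiff_add_card_inter A B
    have h2 := Finset.card_sdiff_add_card_inter B A
    rw [Finset.inter_comm B A] at h2
    rw [hA.1] at h1
    rw [hB.1] at h2
    have hgea : 1 ≤ (A \ B).card := Finset.card_pos.2 ⟨a, ha⟩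
    obtain ⟨b₀, hb₀⟩ := Finset.card_eq_one.1 (show (B \ A).card = 1 by omega)
    have hb₀mem : b₀ ∈ B \ A := hb₀ ▸ Finset.mem_singleton_self b₀
    obtain ⟨x, hx⟩ := Finset.card_eq_one.1 (show (A \ B).card = 1 by omega)
    have hax : a = x := Finset.mem_singleton.1 (hx ▸ ha)
    subst hax
    have hBeq : B = insert b₀ D := by
      have hsub : insert b₀ D ⊆ B := by
        intro y hy
        rcases Finset.mem_insert.1 hy with rfl | hy
        · exact (Finset.mem_sdiff.1 hb₀mem).1
        · by_contra hyB
          have hmem : y ∈ A \ B := Finset.mem_sdiff.2 ⟨hDA hy, hyB⟩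
          rw [hx] at hmem
          exact (Finset.mem_erase.1 hy).1 (Finset.mem_singleton.1 hmem)
      have hc : B.card ≤ (insert b₀ D).card := by
        rw [Finset.card_insert_of_notMem (fun h => (Finset.mem_sdiff.1 hb₀mem).2 (hDA h)),
          hDcard, hB.1]
      exact (Finset.eq_of_subset_of_card_le hsub hc).symm
    rcases hbad b₀ hb₀mem with h | ⟨j, h⟩
    · rw [← hBeq] at h
      exact hB.2.1 h
    · rw [← hBeq] at h
      exact (hB.2.2 j).1 h

end MIHelpers

/-- `(E_n, B_n)` satisfies the basis-exchange axiom (and `B_n` is nonempty), hence it defines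
a matroid whose bases are exactly the members of `B_n`; all bases have size `n + 3`, so the
matroid has rank `n + 3`. -/

theorem MI_is_matroid (n : ℕ) :
    (∃ B, MIBases n B) ∧
    (∀ A B : Finset (MIElt n), MIBases n A → MIBases n B →
      ∀ a ∈ A \ B, ∃ b ∈ B \ A, MIBases n (insert b (A.erase a))) ∧
    ∃ M : Matroid (MIElt n),
      (∀ B : Finset (MIElt n), M.IsBase ↑B ↔ MIBases n B) ∧
      (∀ B : Set (MIElt n), M.IsBase B → B.ncard = n + 3) := by
  classical
  refine ⟨MI_exists_base n, MI_exchange n, ?_⟩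
  set Base : Set (MIElt n) → Prop := fun S => ∃ B : Finset (MIElt n), ↑B = S ∧ MIBases n B
    with hBase
  have hBex : ∃ S, Base S ∧ S.Finite := by
    obtain ⟨B, hB⟩ := MI_exists_base n
    exact ⟨↑B, ⟨B, rfl, hB⟩, B.finite_toSet⟩
  have hBexch : Matroid.ExchangeProperty Base := by
    rintro X Y ⟨A, rfl, hA⟩ ⟨B, rfl, hB⟩ x hx
    have hx' : x ∈ A \ B := by
      rw [Finset.mem_sdiff]
      exact ⟨by exact_mod_cast hx.1, by simpa using hx.2⟩
    obtain ⟨b, hb, hbB⟩ := MI_exchange n A B hA hB x hx'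
    rw [Finset.mem_sdiff] at hb
    refine ⟨b, ⟨by exact_mod_cast hb.1, by simpa using hb.2⟩,
      insert b (A.erase x), ?_, hbB⟩
    push_cast [Finset.coe_insert, Finset.coe_erase]
    rfl
  refine ⟨Matroid.ofExistsFiniteIsBase Set.univ Base hBex hBexch
    (fun B _ => Set.subset_univ B), fun B => ?_, fun S hS => ?_⟩
  · rw [Matroid.ofExistsFiniteIsBase_isBase]
    constructor
    · rintro ⟨B', hB', h⟩
      rwa [Finset.coe_inj.1 hB'] at h
    · exact fun h => ⟨B, rfl, h⟩
  · rw [Matroid.ofExistsFiniteIsBase_isBase] at hS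
    obtain ⟨B, rfl, hB⟩ := hS
    rw [Set.ncard_coe_finset, hB.1]
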